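/- Let g = x₁^{-m₁}⋯xₙ^{-mₙ} a(x₁,…,xₙ) be a Laurent polynomial, where (m₁,…,mₙ) ∈ ℤⁿ and a ∈ ℂ[x₁,…,xₙ] is not divisible by any xᵢ. If the ℂ[x₁,…,xₙ]-subalgebra of ℂ[x₁,x₁^{-1},…,xₙ,xₙ^{-1}] generated by g equals the whole Laurent polynomial ring, then mᵢ ≥ 1 for every i and a·ℂ[x₁,…,xₙ] + x₁⋯xₙ·ℂ[x₁,…,xₙ] = ℂ[x₁,…,xₙ]. -/

import Mathlib

set_option maxHeartbeats 1000000
set_option synthInstance.maxHeartbeats 400000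

private lemma primeX {n : ℕ} (i : Fin n) : Prime (MvPolynomial.X i : MvPolynomial (Fin n) ℂ) := by
  cases n with
  | zero => exact i.elim0
  | succ n =>
    set E := (MvPolynomial.renameEquiv ℂ (Equiv.swap i 0)).trans (MvPolynomial.finSuccEquiv ℂ n) with hE
    rw [← MulEquiv.prime_iff E]
    show Prime (E (MvPolynomial.X i))
    have he : E (MvPolynomial.X i) = Polynomial.X := by
      rw [hE, AlgEquiv.trans_apply, MvPolynomial.renameEquiv_apply, MvPolynomial.rename_X,
        Equiv.swap_apply_left, MvPolynomial.finSuccEquiv_X_zero]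
    rw [he]
    exact Polynomial.prime_X

private lemma not_dvd_X {n : ℕ} {q a : MvPolynomial (Fin n) ℂ} (hq : Prime q) (hqa : q ∣ a)
    (ha : ∀ i, ¬ (MvPolynomial.X i ∣ a)) (i : Fin n) : ¬ q ∣ MvPolynomial.X i := by
  intro hd
  obtain ⟨c, hc⟩ := hd
  rcases (primeX i).irreducible.isUnit_or_isUnit hc with hu | hu
  · exact hq.not_unit hu
  · obtain ⟨v, rfl⟩ := hu
    refine ha i (dvd_trans ⟨((v⁻¹ : _ˣ) : MvPolynomial (Fin n) ℂ), ?_⟩ hqa)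
    rw [hc, mul_assoc]
    simp


open MvPolynomial

/-- If the `ℂ[x₁,…,xₙ]`-subalgebra of the Laurent polynomial ring
generated by `g = x^{-[m]} a(x)` (with no `xᵢ` dividing `a`) is the whole Laurent
polynomial ring, then every `mᵢ ≥ 1` and `a·ℂ[x] + x₁⋯xₙ·ℂ[x] = ℂ[x]`. -/
theorem stmt1 (n : ℕ) (m : Fin n →₀ ℤ) (a : MvPolynomial (Fin n) ℂ)
    (ha : ∀ i, ¬ (MvPolynomial.X i ∣ a))
    (φ : MvPolynomial (Fin n) ℂ →ₐ[ℂ] AddMonoidAlgebra ℂ (Fin n →₀ ℤ))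
    (hφ : φ = MvPolynomial.aeval
      (fun i => AddMonoidAlgebra.single (Finsupp.single i 1) (1 : ℂ)))
    (h : Algebra.adjoin ℂ
        (Set.range (fun i => φ (MvPolynomial.X i)) ∪
          {AddMonoidAlgebra.single (-m) (1 : ℂ) * φ a}) = ⊤) :
    (∀ i, 1 ≤ m i) ∧
      Ideal.span ({a, ∏ i, MvPolynomial.X i} : Set (MvPolynomial (Fin n) ℂ)) = ⊤ := by
  classical
  constructor
  · -- every mᵢ ≥ 1
    intro i
    by_contra hm
    push_neg at hm
    rw [Int.lt_iff_add_one_le] at hm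
    have hm0 : m i ≤ 0 := by omega
    -- subalgebra of Laurent polys with nonneg i-exponents
    set S : Subalgebra ℂ (AddMonoidAlgebra ℂ (Fin n →₀ ℤ)) :=
      { carrier := {f | ∀ β ∈ f.coeff.support, (0:ℤ) ≤ β i}
        mul_mem' := by
          intro f g hf hg β hβ
          have hs := AddMonoidAlgebra.support_coeff_mul_subset f g hβ
          rw [Finset.mem_add] at hs
          obtain ⟨γ, hγ, δ, hδ, rfl⟩ := hs
          have := add_nonneg (hf γ hγ) (hg δ hδ)
          simpa using this
        one_mem' := by
          intro β hβ
          rw [AddMonoidAlgebra.one_def, AddMonoidAlgebra.coeff_single] at hβ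
          have := Finsupp.support_single_subset hβ
          simp only [Finset.mem_singleton] at this
          subst this; simp
        add_mem' := by
          intro f g hf hg β hβ
          rw [AddMonoidAlgebra.coeff_add] at hβ
          rcases Finset.mem_union.mp (Finsupp.support_add hβ) with hc | hc
          · exact hf β hc
          · exact hg β hc
        zero_mem' := by intro β hβ; simp at hβ
        algebraMap_mem' := by
          intro r β hβ
          have h0 : (algebraMap ℂ (AddMonoidAlgebra ℂ (Fin n →₀ ℤ)) r) = AddMonoidAlgebra.single 0 r := rfl
          rw [h0, AddMonoidAlgebra.coeff_single] at hβ
          have := Finsupp.support_single_subset hβ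
          simp only [Finset.mem_singleton] at this
          subst this; simp } with hS
    -- all φ p lie in S
    have hX : ∀ j, φ (MvPolynomial.X j) ∈ S := by
      intro j
      rw [hφ, aeval_X]
      intro β hβ
      rw [AddMonoidAlgebra.coeff_single] at hβ
      have := Finsupp.support_single_subset hβ
      simp only [Finset.mem_singleton] at this
      subst this
      rcases eq_or_ne j i with rfl | hji
      · simp
      · simp [Finsupp.single_apply, hji]
    have hP : ∀ p : MvPolynomial (Fin n) ℂ, φ p ∈ S := by
      intro p
      have hp : p ∈ Algebra.adjoin ℂ (Set.range (MvPolynomial.X : Fin n → MvPolynomial (Fin n) ℂ)) := by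
        rw [MvPolynomial.adjoin_range_X]; trivial
      induction hp using Algebra.adjoin_induction with
      | mem x hx => obtain ⟨j, rfl⟩ := hx; exact hX j
      | algebraMap r => rw [AlgHom.commutes]; exact S.algebraMap_mem r
      | add x y hx hy ihx ihy => rw [map_add]; exact S.add_mem ihx ihy
      | mul x y hx hy ihx ihy => rw [map_mul]; exact S.mul_mem ihx ihy
    -- generators in S
    have hle : Algebra.adjoin ℂ
          (Set.range (fun i => φ (MvPolynomial.X i)) ∪
            {AddMonoidAlgebra.single (-m) (1 : ℂ) * φ a}) ≤ S := by
      apply Algebra.adjoin_le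
      rintro x (⟨j, rfl⟩ | rfl)
      · exact hX j
      · intro β hβ
        have hs := AddMonoidAlgebra.support_coeff_mul_subset _ _ hβ
        rw [Finset.mem_add] at hs
        obtain ⟨γ, hγ, δ, hδ, rfl⟩ := hs
        rw [AddMonoidAlgebra.coeff_single] at hγ
        have hγ' := Finsupp.support_single_subset hγ
        simp only [Finset.mem_singleton] at hγ'
        subst hγ'
        have h1 : (0:ℤ) ≤ δ i := hP a δ hδ
        have : ((-m) + δ) i = -(m i) + δ i := by simp
        rw [this]
        omega
    -- contradiction with x_i⁻¹
    have hz : AddMonoidAlgebra.single (-(Finsupp.single i 1)) (1:ℂ) ∈ S := by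
      apply hle
      rw [h]; trivial
    have := hz (-(Finsupp.single i (1:ℤ))) (by
      rw [AddMonoidAlgebra.coeff_single, Finsupp.support_single_ne_zero _ (one_ne_zero)]
      simp)
    simp at this
  · -- ideal statement
    by_contra hsp
    obtain ⟨𝔪, h𝔪, hle𝔪⟩ := Ideal.exists_le_maximal _ hsp
    haveI := h𝔪.isPrime
    have haM : a ∈ 𝔪 := hle𝔪 (Ideal.subset_span (by simp))
    have hprodM : (∏ i, MvPolynomial.X i : MvPolynomial (Fin n) ℂ) ∈ 𝔪 :=
      hle𝔪 (Ideal.subset_span (by simp))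
    -- n = 0 : product is 1
    rcases Nat.eq_zero_or_pos n with hn | hn
    · subst hn
      simp at hprodM
      exact h𝔪.ne_top ((Ideal.eq_top_iff_one _).mpr hprodM)
    -- a ≠ 0
    have ha0 : a ≠ 0 := by
      intro h0
      exact ha ⟨0, hn⟩ (h0 ▸ dvd_zero _)
    -- get prime factor q of a inside 𝔪
    have hfac := UniqueFactorizationMonoid.factors_prod ha0
    obtain ⟨u, hu⟩ := hfac
    have hprodmem : (UniqueFactorizationMonoid.factors a).prod ∈ 𝔪 := by
      have h1 : (UniqueFactorizationMonoid.factors a).prod * u ∈ 𝔪 := by rw [hu]; exact haM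
      have h2 := Ideal.mul_mem_right ((u⁻¹ : _ˣ) : MvPolynomial (Fin n) ℂ) _ h1
      simpa [mul_assoc] using h2
    obtain ⟨q, hqf, hqM⟩ := (Ideal.IsPrime.multiset_prod_mem_iff_exists_mem h𝔪.isPrime _).mp hprodmem
    have hq : Prime q := UniqueFactorizationMonoid.prime_of_factor q hqf
    have hqa : q ∣ a := (Multiset.dvd_prod hqf).trans ⟨u, hu.symm⟩
    have hqX : ∀ i, ¬ q ∣ MvPolynomial.X i := not_dvd_X hq hqa ha
    have hq0 : q ≠ 0 := hq.ne_zero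
    haveI hprime : (Ideal.span {q} : Ideal (MvPolynomial (Fin n) ℂ)).IsPrime :=
      (Ideal.span_singleton_prime hq0).mpr hq
    haveI := Ideal.Quotient.isDomain (Ideal.span {q} : Ideal (MvPolynomial (Fin n) ℂ))
    set D := MvPolynomial (Fin n) ℂ ⧸ (Ideal.span {q} : Ideal (MvPolynomial (Fin n) ℂ)) with hD
    set K := FractionRing D with hK
    set π : MvPolynomial (Fin n) ℂ →+* K :=
      (algebraMap D K).comp (Ideal.Quotient.mk _) with hπ
    have hker : ∀ p, π p = 0 ↔ q ∣ p := by
      intro p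
      rw [hπ, RingHom.comp_apply,
        map_eq_zero_iff _ (IsFractionRing.injective D K),
        Ideal.Quotient.eq_zero_iff_mem, Ideal.mem_span_singleton]
    have hπa : π a = 0 := (hker a).mpr hqa
    have hπX : ∀ i, π (MvPolynomial.X i) ≠ 0 := fun i h0 => hqX i ((hker _).mp h0)
    set u : Fin n → Kˣ := fun i => (Ne.isUnit (hπX i)).unit with hu
    have huv : ∀ i, (u i : K) = π (MvPolynomial.X i) := fun i => IsUnit.unit_spec _
    set E : (Fin n →₀ ℤ) →+ Additive Kˣ :=
      Finsupp.liftAddHom (fun i => zmultiplesHom (Additive Kˣ) (Additive.ofMul (u i))) with hE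
    set G : Multiplicative (Fin n →₀ ℤ) →* Kˣ := AddMonoidHom.toMultiplicativeLeft E with hG
    set ψ : AddMonoidAlgebra ℂ (Fin n →₀ ℤ) →+* K :=
      AddMonoidAlgebra.liftNCRingHom (π.comp (MvPolynomial.C : ℂ →+* MvPolynomial (Fin n) ℂ))
        ((Units.coeHom K).comp G) (fun x y => Commute.all _ _) with hψ
    have hψsingle : ∀ (β : Fin n →₀ ℤ) (c : ℂ),
        ψ (AddMonoidAlgebra.single β c) = π (MvPolynomial.C c) * (G (Multiplicative.ofAdd β) : K) := by
      intro β c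
      rw [hψ]
      exact AddMonoidAlgebra.liftNC_single _ _ β c
    have hGsingle : ∀ (i : Fin n) (k : ℤ),
        G (Multiplicative.ofAdd (Finsupp.single i k)) = (u i) ^ k := by
      intro i k
      rw [hG, AddMonoidHom.coe_toMultiplicativeLeft]
      show Additive.toMul (E (Finsupp.single i k)) = u i ^ k
      rw [hE, Finsupp.liftAddHom_apply_single, zmultiplesHom_apply]
      rfl
    -- ψ ∘ φ = π
    have hcomp : ψ.comp (φ : MvPolynomial (Fin n) ℂ →+* AddMonoidAlgebra ℂ (Fin n →₀ ℤ)) = π := by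
      apply MvPolynomial.ringHom_ext
      · intro r
        have h1 : φ (MvPolynomial.C r) = AddMonoidAlgebra.single 0 r := by
          rw [hφ]
          rw [show (MvPolynomial.C r : MvPolynomial (Fin n) ℂ) = algebraMap ℂ _ r from rfl]
          rw [AlgHom.commutes]
          rfl
        rw [RingHom.comp_apply, RingHom.coe_coe, h1, hψsingle]
        simp only [ofAdd_zero, map_one, Units.val_one, mul_one]
      · intro i
        have h1 : φ (MvPolynomial.X i) = AddMonoidAlgebra.single (Finsupp.single i 1) 1 := by
          rw [hφ, aeval_X]
        rw [RingHom.comp_apply, RingHom.coe_coe, h1, hψsingle, hGsingle]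
        simp [huv]
    have hcomp' : ∀ p, ψ (φ p) = π p := fun p => by
      have := RingHom.congr_fun hcomp p
      simpa using this
    -- image of adjoin lands in range of π
    have hrange : ∀ z ∈ Algebra.adjoin ℂ
          (Set.range (fun i => φ (MvPolynomial.X i)) ∪
            {AddMonoidAlgebra.single (-m) (1 : ℂ) * φ a}),
        ψ z ∈ Set.range π := by
      intro z hz
      induction hz using Algebra.adjoin_induction with
      | mem x hx =>
        rcases hx with ⟨i, rfl⟩ | hx
        · exact ⟨MvPolynomial.X i, (hcomp' _).symm⟩
        · simp only [Set.mem_singleton_iff] at hx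
          subst hx
          refine ⟨0, ?_⟩
          rw [map_mul, hcomp', hπa, mul_zero, map_zero]
      | algebraMap r =>
        refine ⟨MvPolynomial.C r, ?_⟩
        have : (algebraMap ℂ (AddMonoidAlgebra ℂ (Fin n →₀ ℤ)) r) = φ (MvPolynomial.C r) := by
          rw [show (MvPolynomial.C r : MvPolynomial (Fin n) ℂ) = algebraMap ℂ _ r from rfl, AlgHom.commutes]
        rw [this, hcomp']
      | add x y hx hy ihx ihy =>
        obtain ⟨c1, hc1⟩ := ihx; obtain ⟨c2, hc2⟩ := ihy
        exact ⟨c1 + c2, by rw [map_add, map_add, hc1, hc2]⟩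
      | mul x y hx hy ihx ihy =>
        obtain ⟨c1, hc1⟩ := ihx; obtain ⟨c2, hc2⟩ := ihy
        exact ⟨c1 * c2, by rw [map_mul, map_mul, hc1, hc2]⟩
    -- the inverse of ∏ X i is in the range
    set t : Fin n →₀ ℤ := ∑ i, Finsupp.single i (1:ℤ) with ht
    have hGt : (G (Multiplicative.ofAdd t) : K) = π (∏ i, MvPolynomial.X i) := by
      have hEt : E t = ∑ i, Additive.ofMul (u i) := by
        rw [ht, map_sum]
        congr 1
        ext i
        rw [hE, Finsupp.liftAddHom_apply_single, zmultiplesHom_apply, one_zsmul]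
      rw [hG, AddMonoidHom.coe_toMultiplicativeLeft]
      show ((Additive.toMul (E t) : Kˣ) : K) = _
      rw [hEt]
      have h2 : (Additive.toMul (∑ i, Additive.ofMul (u i)) : Kˣ) = ∏ i, u i := by
        rw [toMul_sum]
        simp
      rw [h2, Units.coe_prod]
      rw [map_prod π]
      exact Finset.prod_congr rfl (fun i _ => huv i)
    -- use surjectivity
    have hz : AddMonoidAlgebra.single (-t) (1:ℂ) ∈ Algebra.adjoin ℂ
          (Set.range (fun i => φ (MvPolynomial.X i)) ∪
            {AddMonoidAlgebra.single (-m) (1 : ℂ) * φ a}) := by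
      rw [h]; trivial
    obtain ⟨c, hc⟩ := hrange _ hz
    rw [hψsingle] at hc
    have hGneg : (G (Multiplicative.ofAdd (-t)) : K) = ((G (Multiplicative.ofAdd t))⁻¹ : Kˣ) := by
      congr 1
      have : Multiplicative.ofAdd (-t) = (Multiplicative.ofAdd t)⁻¹ := rfl
      rw [this, map_inv]
    simp only [map_one, one_mul] at hc
    rw [hGneg] at hc
    have hπ1 : π (c * (∏ i, MvPolynomial.X i)) = 1 := by
      rw [map_mul, hc, ← hGt]
      exact Units.inv_mul _
    have : π (c * (∏ i, MvPolynomial.X i) - 1) = 0 := by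
      rw [map_sub, hπ1, map_one, sub_self]
    obtain ⟨d, hd⟩ := (hker _).mp this
    -- final contradiction
    have h1M : c * (∏ i, MvPolynomial.X i) ∈ 𝔪 := Ideal.mul_mem_left _ c hprodM
    have h2M : q * d ∈ 𝔪 := Ideal.mul_mem_right d _ hqM
    have hone : (1 : MvPolynomial (Fin n) ℂ) = c * (∏ i, MvPolynomial.X i) - q * d := by
      rw [← hd]; ring
    have : (1 : MvPolynomial (Fin n) ℂ) ∈ 𝔪 := by rw [hone]; exact 𝔪.sub_mem h1M h2M
    exact h𝔪.ne_top ((Ideal.eq_top_iff_one _).mpr this)
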